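/- Let P_{XY} = P₁ × P₂ and Q_{XY} = Q₁ × Q₂ be products of BSDSs with parameters p₁, p₂ and q₁ = p₂, q₂ = p₁ (so p₁ = q₂, p₂ = q₁), with all parameters in (0,1/2] and p₁ ≠ p₂. Then the conditional entropies satisfy H_P(X|Y) = H_Q(X|Y) = h(p₁) + h(p₂), and the minimum of D(P̃ ‖ Q_{XY}) over joint distributions P̃ on {0,1}² × {0,1}² with P̃_X = P_X, P̃_Y = P_Y, and H(X̃|Ỹ) ≥ H_P(X|Y) equals 0, attained at P̃ = Q_{XY}. -/

import Mathlib

open Real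

/-- Binary symmetric double source with crossover probability `r`. -/
noncomputable def bsds (r : ℝ) : Fin 2 → Fin 2 → ℝ :=
  fun x y => if x = y then (1 - r) / 2 else r / 2

/-- Product of two BSDSs. -/
noncomputable def prodSrc (r₁ r₂ : ℝ) : Fin 2 × Fin 2 → Fin 2 × Fin 2 → ℝ :=
  fun x y => bsds r₁ x.1 y.1 * bsds r₂ x.2 y.2

/-- Binary entropy. -/
noncomputable def hbin (p : ℝ) : ℝ := -(p * Real.log p + (1 - p) * Real.log (1 - p))

/-- KL divergence on a finite product alphabet. -/
noncomputable def kl2 {X Y : Type*} [Fintype X] [Fintype Y] (P Q : X → Y → ℝ) : ℝ :=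
  ∑ x, ∑ y, P x y * Real.log (P x y / Q x y)

/-- Conditional entropy `H(X̃|Ỹ)` of a joint distribution. -/
noncomputable def condEnt {X Y : Type*} [Fintype X] [Fintype Y] (P : X → Y → ℝ) : ℝ :=
  ∑ x, ∑ y, P x y * Real.log ((∑ x', P x' y) / P x y)

lemma marg (r₁ r₂ : ℝ) (y : Fin 2 × Fin 2) :
    ∑ x' : Fin 2 × Fin 2, prodSrc r₁ r₂ x' y = 1/4 := by
  obtain ⟨y1, y2⟩ := y
  fin_cases y1 <;> fin_cases y2 <;>
    simp [prodSrc, bsds, Fintype.sum_prod_type, Fin.sum_univ_two] <;> ring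

lemma row_marg (r₁ r₂ : ℝ) (x : Fin 2 × Fin 2) :
    ∑ y : Fin 2 × Fin 2, prodSrc r₁ r₂ x y = 1/4 := by
  obtain ⟨x1, x2⟩ := x
  fin_cases x1 <;> fin_cases x2 <;>
    simp [prodSrc, bsds, Fintype.sum_prod_type, Fin.sum_univ_two] <;> ring

lemma log_aux (u v : ℝ) (hu : 0 < u) (hv : 0 < v) :
    Real.log (1/4 / (u/2 * (v/2))) = -(Real.log u + Real.log v) := by
  rw [show (1:ℝ)/4 / (u/2 * (v/2)) = (u*v)⁻¹ by field_simp; norm_num,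
    Real.log_inv, Real.log_mul hu.ne' hv.ne']

lemma condEnt_prod (r₁ r₂ : ℝ) (h₁ : 0 < r₁) (h₁' : r₁ < 1) (h₂ : 0 < r₂) (h₂' : r₂ < 1) :
    condEnt (prodSrc r₁ r₂) = hbin r₁ + hbin r₂ := by
  have h1 : 0 < 1 - r₁ := by linarith
  have h2 : 0 < 1 - r₂ := by linarith
  unfold condEnt
  simp only [marg]
  simp only [Fintype.sum_prod_type, Fin.sum_univ_two, prodSrc, bsds]
  norm_num
  rw [log_aux _ _ h1 h2, log_aux _ _ h1 h₂, log_aux _ _ h₁ h2, log_aux _ _ h₁ h₂]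
  unfold hbin; ring

lemma kl2_self {X Y : Type*} [Fintype X] [Fintype Y] (P : X → Y → ℝ) : kl2 P P = 0 := by
  have : ∀ a : ℝ, a * Real.log (a / a) = 0 := by
    intro a
    rcases eq_or_ne a 0 with h | h
    · simp [h]
    · simp [div_self h]
  simp [kl2, this]

lemma kl2_nonneg {X Y : Type*} [Fintype X] [Fintype Y] (P Q : X → Y → ℝ)
    (hP : ∀ x y, 0 ≤ P x y) (hQ : ∀ x y, 0 < Q x y)
    (hsum : ∑ x, ∑ y, P x y = ∑ x, ∑ y, Q x y) : 0 ≤ kl2 P Q := by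
  have key : ∀ x y, P x y - Q x y ≤ P x y * Real.log (P x y / Q x y) := by
    intro x y
    rcases eq_or_lt_of_le (hP x y) with h | h
    · rw [← h]; simp; linarith [(hQ x y).le]
    · have hl := Real.log_le_sub_one_of_pos (div_pos (hQ x y) h)
      rw [Real.log_div (hQ x y).ne' h.ne'] at hl
      rw [Real.log_div h.ne' (hQ x y).ne']
      have h2 : Q x y / P x y * P x y = Q x y := div_mul_cancel₀ _ h.ne'
      nlinarith [mul_le_mul_of_nonneg_right hl h.le]
  calc (0:ℝ) = (∑ x, ∑ y, P x y) - (∑ x, ∑ y, Q x y) := by rw [hsum]; ring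
    _ = ∑ x, ∑ y, (P x y - Q x y) := by
        rw [← Finset.sum_sub_distrib]
        exact Finset.sum_congr rfl fun x _ => (Finset.sum_sub_distrib _ _).symm
    _ ≤ ∑ x, ∑ y, P x y * Real.log (P x y / Q x y) :=
        Finset.sum_le_sum fun x _ => Finset.sum_le_sum fun y _ => key x y

lemma prodSrc_pos (r₁ r₂ : ℝ) (h₁ : 0 < r₁) (h₁' : r₁ < 1) (h₂ : 0 < r₂) (h₂' : r₂ < 1)
    (x y : Fin 2 × Fin 2) : 0 < prodSrc r₁ r₂ x y := by
  unfold prodSrc bsds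
  split <;> split <;> nlinarith

/-- For the reversely aligned product of BSDSs, `H_P(X|Y) = H_Q(X|Y) = h(p₁) + h(p₂)`,
and the inner minimization of the binning bound equals `0`, attained at `P̃ = Q_{XY}`. -/
theorem stmt9 (p₁ p₂ q₁ q₂ : ℝ)
    (hp₁ : 0 < p₁ ∧ p₁ ≤ 1 / 2) (hp₂ : 0 < p₂ ∧ p₂ ≤ 1 / 2)
    (h12 : q₂ = p₁) (h21 : q₁ = p₂) (hne : p₁ ≠ p₂) :
    condEnt (prodSrc p₁ p₂) = hbin p₁ + hbin p₂ ∧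
    condEnt (prodSrc q₁ q₂) = hbin p₁ + hbin p₂ ∧
    IsLeast {d : ℝ | ∃ Pt : Fin 2 × Fin 2 → Fin 2 × Fin 2 → ℝ,
        (∀ x y, 0 ≤ Pt x y) ∧
        (∀ x, ∑ y, Pt x y = ∑ y, prodSrc p₁ p₂ x y) ∧
        (∀ y, ∑ x, Pt x y = ∑ x, prodSrc p₁ p₂ x y) ∧
        condEnt Pt ≥ condEnt (prodSrc p₁ p₂) ∧
        d = kl2 Pt (prodSrc q₁ q₂)}
      0 ∧
    kl2 (prodSrc q₁ q₂) (prodSrc q₁ q₂) = 0 := by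
  obtain ⟨hp₁0, hp₁h⟩ := hp₁
  obtain ⟨hp₂0, hp₂h⟩ := hp₂
  have hp₁1 : p₁ < 1 := by linarith
  have hp₂1 : p₂ < 1 := by linarith
  rw [h12, h21]
  have hP : condEnt (prodSrc p₁ p₂) = hbin p₁ + hbin p₂ :=
    condEnt_prod p₁ p₂ hp₁0 hp₁1 hp₂0 hp₂1
  have hQ : condEnt (prodSrc p₂ p₁) = hbin p₁ + hbin p₂ := by
    rw [condEnt_prod p₂ p₁ hp₂0 hp₂1 hp₁0 hp₁1]; ring
  refine ⟨hP, hQ, ⟨⟨prodSrc p₂ p₁, fun x y => (prodSrc_pos _ _ hp₂0 hp₂1 hp₁0 hp₁1 x y).le,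
      fun x => by rw [row_marg, row_marg],
      fun y => by rw [marg, marg],
      by rw [hP, hQ],
      (kl2_self _).symm⟩, ?_⟩, kl2_self _⟩
  rintro d ⟨Pt, hPt0, hrow, _, _, rfl⟩
  refine kl2_nonneg _ _ hPt0 (fun x y => prodSrc_pos _ _ hp₂0 hp₂1 hp₁0 hp₁1 x y) ?_
  calc ∑ x, ∑ y, Pt x y = ∑ x : Fin 2 × Fin 2, ∑ y, prodSrc p₁ p₂ x y :=
        Finset.sum_congr rfl fun x _ => hrow x
    _ = ∑ x : Fin 2 × Fin 2, ∑ y, prodSrc p₂ p₁ x y := by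
        simp only [row_marg]
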